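/- Let G be a simple graph on a vertex set V satisfying the cactus property: for all vertices u, v and all closed walks c₁ : G.Walk u u and c₂ : G.Walk v v that are cycles (IsCycle), if the edge sets of c₁ and c₂ (as finite sets) are different, then the supports of c₁ and c₂ share at most one vertex. Then for all distinct vertices a ≠ b there do not exist three walks p₁, p₂, p₃ : G.Walk a b, each of which is a path (IsPath), with pairwise distinct edge sets, such that for each pair i ≠ j the intersection of the supports of p_i and p_j is contained in {a, b}. -/

import Mathlib

open SimpleGraph Walk

/-- A path from `a` to `b` (with `a ≠ b`) that uses the edge `s(a,b)` is exactly that edge. -/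
lemma path_edge_single {V : Type*} {G : SimpleGraph V} {a b : V} (hab : a ≠ b)
    (p : G.Walk a b) (hp : p.IsPath) (he : s(a, b) ∈ p.edges) : p.edges = [s(a, b)] := by
  cases p with
  | nil => simp at he
  | cons h q =>
    rename_i c
    rw [SimpleGraph.Walk.cons_isPath_iff] at hp
    rw [SimpleGraph.Walk.edges_cons, List.mem_cons] at he
    rcases he with he | he
    · have hcb : c = b := by
        have := Sym2.eq_iff.mp he.symm
        rcases this with ⟨-, h2⟩ | ⟨h1, -⟩
        · exact h2
        · exact absurd h1 hab
      subst hcb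
      have : q = Walk.nil := SimpleGraph.Walk.isPath_iff_eq_nil.mp hp.1
      subst this
      simp
    · exact absurd (q.fst_mem_support_of_mem_edges he) hp.2

/-- Two internally disjoint paths with different edge sets have disjoint edges. -/
lemma paths_edges_disjoint {V : Type*} [DecidableEq V] {G : SimpleGraph V} {a b : V}
    (hab : a ≠ b) (p q : G.Walk a b) (hp : p.IsPath) (hq : q.IsPath)
    (hne : p.edges.toFinset ≠ q.edges.toFinset)
    (hdisj : ↑(p.support.toFinset ∩ q.support.toFinset) ⊆ ({a, b} : Set V)) :
    List.Disjoint p.edges q.edges := by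
  intro e hep heq
  induction e with
  | h x y =>
    have hxy : G.Adj x y := p.adj_of_mem_edges hep
    have hx : x ∈ ({a, b} : Set V) := hdisj (by
      simp only [Finset.coe_inter, Set.mem_inter_iff, List.coe_toFinset, Set.mem_setOf_eq]
      exact ⟨p.fst_mem_support_of_mem_edges hep, q.fst_mem_support_of_mem_edges heq⟩)
    have hy : y ∈ ({a, b} : Set V) := hdisj (by
      simp only [Finset.coe_inter, Set.mem_inter_iff, List.coe_toFinset, Set.mem_setOf_eq]
      exact ⟨p.snd_mem_support_of_mem_edges hep, q.snd_mem_support_of_mem_edges heq⟩)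
    have hxyne : x ≠ y := hxy.ne
    have hxyab : s(x, y) = s(a, b) := by
      rcases hx with rfl | rfl <;> rcases hy with rfl | rfl
      · exact absurd rfl hxyne
      · rfl
      · exact Sym2.eq_swap
      · exact absurd rfl hxyne
    rw [hxyab] at hep heq
    have h1 := path_edge_single hab p hp hep
    have h2 := path_edge_single hab q hq heq
    exact hne (by rw [h1, h2])

/-- Two internally disjoint edge-distinct paths form a cycle. -/
lemma paths_form_cycle {V : Type*} [DecidableEq V] {G : SimpleGraph V} {a b : V}
    (hab : a ≠ b) (p q : G.Walk a b) (hp : p.IsPath) (hq : q.IsPath)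
    (hne : p.edges.toFinset ≠ q.edges.toFinset)
    (hdisj : ↑(p.support.toFinset ∩ q.support.toFinset) ⊆ ({a, b} : Set V)) :
    (p.append q.reverse).IsCycle := by
  have hedisj := paths_edges_disjoint hab p q hp hq hne hdisj
  rw [SimpleGraph.Walk.isCycle_def]
  refine ⟨⟨?_⟩, ?_, ?_⟩
  · rw [SimpleGraph.Walk.edges_append, SimpleGraph.Walk.edges_reverse]
    rw [List.nodup_append]
    exact ⟨hp.edges_nodup, List.nodup_reverse.mpr hq.edges_nodup,
      fun e he e' he' h => hedisj he (by subst h; exact List.mem_reverse.mp he')⟩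
  · intro hnil
    have : (p.append q.reverse).length = 0 := by rw [hnil]; rfl
    rw [SimpleGraph.Walk.length_append] at this
    have : p.length = 0 := by omega
    exact hab ((SimpleGraph.Walk.eq_of_length_eq_zero this) )
  · rw [SimpleGraph.Walk.tail_support_append, List.nodup_append]
    refine ⟨hp.support_nodup.tail, hq.reverse.support_nodup.tail, ?_⟩
    intro x hxp y hxq hxy
    subst hxy
    have hxP : x ∈ p.support := List.mem_of_mem_tail hxp
    have hxQ : x ∈ q.support := by
      have : x ∈ q.reverse.support := List.mem_of_mem_tail hxq
      rwa [SimpleGraph.Walk.support_reverse, List.mem_reverse] at this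
    have hx : x ∈ ({a, b} : Set V) := hdisj (by
      simp only [Finset.coe_inter, Set.mem_inter_iff, List.coe_toFinset, Set.mem_setOf_eq]
      exact ⟨hxP, hxQ⟩)
    rcases hx with rfl | rfl
    · have := hp.support_nodup
      rw [p.support_eq_cons, List.nodup_cons] at this
      exact this.1 hxp
    · have := hq.reverse.support_nodup
      rw [q.reverse.support_eq_cons, List.nodup_cons] at this
      exact this.1 hxq

lemma cycle_edges_toFinset {V : Type*} [DecidableEq V] {G : SimpleGraph V} {a b : V}
    (p q : G.Walk a b) :
    (p.append q.reverse).edges.toFinset = p.edges.toFinset ∪ q.edges.toFinset := by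
  rw [SimpleGraph.Walk.edges_append, SimpleGraph.Walk.edges_reverse, List.toFinset_append,
    List.toFinset_reverse]

/-- In a cactus graph (any two distinct simple cycles share at most one vertex),
no two distinct vertices are joined by three pairwise edge-distinct, internally
vertex-disjoint paths. -/
theorem cactus_no_three_disjoint_paths {V : Type*} [DecidableEq V] (G : SimpleGraph V)
    (hcactus : ∀ (u v : V) (c₁ : G.Walk u u) (c₂ : G.Walk v v),
      c₁.IsCycle → c₂.IsCycle → c₁.edges.toFinset ≠ c₂.edges.toFinset →
      (c₁.support.toFinset ∩ c₂.support.toFinset).card ≤ 1) :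
    ∀ a b : V, a ≠ b →
      ¬ ∃ (p₁ p₂ p₃ : G.Walk a b),
          p₁.IsPath ∧ p₂.IsPath ∧ p₃.IsPath ∧
          p₁.edges.toFinset ≠ p₂.edges.toFinset ∧
          p₁.edges.toFinset ≠ p₃.edges.toFinset ∧
          p₂.edges.toFinset ≠ p₃.edges.toFinset ∧
          ↑(p₁.support.toFinset ∩ p₂.support.toFinset) ⊆ ({a, b} : Set V) ∧
          ↑(p₁.support.toFinset ∩ p₃.support.toFinset) ⊆ ({a, b} : Set V) ∧
          ↑(p₂.support.toFinset ∩ p₃.support.toFinset) ⊆ ({a, b} : Set V) := by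
  intro a b hab
  rintro ⟨p₁, p₂, p₃, h₁, h₂, h₃, e₁₂, e₁₃, e₂₃, d₁₂, d₁₃, d₂₃⟩
  set c₁ := p₁.append p₂.reverse with hc₁
  set c₂ := p₁.append p₃.reverse with hc₂
  have hcyc₁ : c₁.IsCycle := paths_form_cycle hab p₁ p₂ h₁ h₂ e₁₂ d₁₂
  have hcyc₂ : c₂.IsCycle := paths_form_cycle hab p₁ p₃ h₁ h₃ e₁₃ d₁₃
  have hd₁₂ := paths_edges_disjoint hab p₁ p₂ h₁ h₂ e₁₂ d₁₂
  have hd₁₃ := paths_edges_disjoint hab p₁ p₃ h₁ h₃ e₁₃ d₁₃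
  have hEne : c₁.edges.toFinset ≠ c₂.edges.toFinset := by
    rw [hc₁, hc₂, cycle_edges_toFinset, cycle_edges_toFinset]
    intro hE
    apply e₂₃
    ext e
    simp only [List.mem_toFinset]
    constructor
    · intro he
      have : e ∈ p₁.edges.toFinset ∪ p₃.edges.toFinset := by
        rw [← hE]; simp [he]
      simp only [Finset.mem_union, List.mem_toFinset] at this
      rcases this with h | h
      · exact absurd he (fun he' => hd₁₂ h he')
      · exact h
    · intro he
      have : e ∈ p₁.edges.toFinset ∪ p₂.edges.toFinset := by
        rw [hE]; simp [he]
      simp only [Finset.mem_union, List.mem_toFinset] at this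
      rcases this with h | h
      · exact absurd he (fun he' => hd₁₃ h he')
      · exact h
  have hcard := hcactus a a c₁ c₂ hcyc₁ hcyc₂ hEne
  have hsub : ({a, b} : Finset V) ⊆ c₁.support.toFinset ∩ c₂.support.toFinset := by
    intro x hx
    simp only [Finset.mem_insert, Finset.mem_singleton] at hx
    have hxs : x ∈ p₁.support := by
      rcases hx with rfl | rfl
      · exact p₁.start_mem_support
      · exact p₁.end_mem_support
    have h1 : x ∈ c₁.support := by
      rw [hc₁, SimpleGraph.Walk.mem_support_append_iff]; exact Or.inl hxs
    have h2 : x ∈ c₂.support := by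
      rw [hc₂, SimpleGraph.Walk.mem_support_append_iff]; exact Or.inl hxs
    simp [h1, h2]
  have := Finset.card_le_card hsub
  rw [Finset.card_pair hab] at this
  omega
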